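/- St. Matthew inequality for the second trajectory of minimum entropy of the negative–negative interaction: if y ≥ 0 and x > 0 satisfy the trajectory equation f(y) − g(x) + y·f'(y) − x·g'(y) = 0, then 0 < y < x; that is, along the trajectory T₂ system x is always strictly ahead of system y with respect to thermodynamic equilibrium. -/

import Mathlib

lemma deriv_nonneg_of_monotoneOn_Ici {h : ℝ → ℝ} {t : ℝ}
    (hd : DifferentiableAt ℝ h t) (hm : MonotoneOn h (Set.Ici 0)) (ht : 0 ≤ t) :
    0 ≤ deriv h t := by
  have H : HasDerivWithinAt h (deriv h t) (Set.Ioi t) t :=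
    hd.hasDerivAt.hasDerivWithinAt
  have hT := hasDerivWithinAt_iff_tendsto_slope.mp H
  have hset : Set.Ioi t \ {t} = Set.Ioi t := by
    simp [Set.diff_singleton_eq_self, Set.notMem_Ioi]
  rw [hset] at hT
  have : ∀ᶠ z in nhdsWithin t (Set.Ioi t), 0 ≤ slope h t z := by
    filter_upwards [self_mem_nhdsWithin] with z hz
    have hzt : t < z := hz
    have hle : h t ≤ h z := hm ht (le_trans ht hzt.le) hzt.le
    rw [slope_def_field]
    exact div_nonneg (by linarith) (by linarith)
  exact ge_of_tendsto hT this

theorem nn_T2_st_matthew (f g : ℝ → ℝ)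
    (hf : ContDiff ℝ 2 f) (hg : ContDiff ℝ 2 g)
    (hf0 : f 0 = 0) (hg0 : g 0 = 0)
    (hfmono : StrictMonoOn f (Set.Ici 0)) (hgmono : StrictMonoOn g (Set.Ici 0))
    (hfg : StrictMonoOn (fun x => f x - g x) (Set.Ici 0))
    (hfg' : MonotoneOn (fun x => deriv f x - deriv g x) (Set.Ici 0))
    (x y : ℝ) (hy : 0 ≤ y) (hx : 0 < x)
    (htraj : f y - g x + y * deriv f y - x * deriv g y = 0) :
    0 < y ∧ y < x := by
  have hfd : Differentiable ℝ f := hf.differentiable (by norm_num)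
  have hgd : Differentiable ℝ g := hg.differentiable (by norm_num)
  have hypos : 0 < y := by
    rcases hy.lt_or_eq with h | h
    · exact h
    · exfalso
      rw [← h] at htraj
      have hgx : 0 < g x := by
        have := hgmono (Set.mem_Ici.mpr (le_refl 0)) hx.le hx
        rwa [hg0] at this
      have hdg0 : 0 ≤ deriv g 0 :=
        deriv_nonneg_of_monotoneOn_Ici (hgd 0) hgmono.monotoneOn le_rfl
      have : 0 ≤ x * deriv g 0 := mul_nonneg hx.le hdg0
      rw [hf0] at htraj
      nlinarith
  refine ⟨hypos, ?_⟩
  by_contra hle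
  push_neg at hle  -- x ≤ y
  have h1 : g x ≤ g y := hgmono.monotoneOn hx.le (by linarith : (0:ℝ) ≤ y) hle
  have hdgy : 0 ≤ deriv g y :=
    deriv_nonneg_of_monotoneOn_Ici (hgd y) hgmono.monotoneOn hy
  have h2 : x * deriv g y ≤ y * deriv g y := mul_le_mul_of_nonneg_right hle hdgy
  have h3 : 0 < f y - g y := by
    have := hfg (Set.mem_Ici.mpr (le_refl 0)) hy hypos
    simpa [hf0, hg0] using this
  have h4 : 0 ≤ deriv f y - deriv g y := by
    have hdiff : Differentiable ℝ (fun x => f x - g x) := hfd.sub hgd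
    have := deriv_nonneg_of_monotoneOn_Ici (hdiff y) hfg.monotoneOn hy
    rwa [deriv_fun_sub (hfd y) (hgd y)] at this
  have h5 : 0 ≤ y * (deriv f y - deriv g y) := mul_nonneg hy h4
  nlinarith
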